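/- Fix d ∈ ℕ and an integer 0 ≤ q ≤ d. Let X ⊆ Y be bounded cubical sets in ℝ^d, and suppose the set Y \ X ⊆ ℝ^d is covered by v elementary d-cubes (i.e., there are elementary d-cubes Q₁, …, Q_v with Y \ X ⊆ Q₁ ∪ ⋯ ∪ Q_v). Then #(K^d_q(Y) \ K^d_q(X)) ≤ (d choose q)·2^{d−q}·v. In particular, #(K^d(Y) \ K^d(X)) ≤ 3^d·v, where K^d(Z) denotes the set of all elementary cubes contained in a cubical set Z. -/

import Mathlib

namespace Cubical

/-- An elementary interval: `[l, l+1]` (nondegenerate) or `{l}` (degenerate), `l ∈ ℤ`. -/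
def IsElemInterval (I : Set ℝ) : Prop :=
  ∃ l : ℤ, I = Set.Icc (l : ℝ) ((l : ℝ) + 1) ∨ I = {(l : ℝ)}

/-- An elementary `q`-cube in `ℝ^d`: a product of `d` elementary intervals, exactly `q`
of which are nondegenerate. -/
def IsElemCube (d q : ℕ) (Q : Set (Fin d → ℝ)) : Prop :=
  ∃ I : Fin d → Set ℝ, (∀ i, IsElemInterval (I i)) ∧
    Nat.card {i : Fin d // ∃ l : ℤ, I i = Set.Icc (l : ℝ) ((l : ℝ) + 1)} = q ∧
    Q = Set.pi Set.univ I

/-- An elementary cube in `ℝ^d` (of some dimension). -/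
def IsCube (d : ℕ) (Q : Set (Fin d → ℝ)) : Prop := ∃ q, IsElemCube d q Q

/-- A bounded cubical set in `ℝ^d`: a finite union of elementary cubes. -/
def IsBoundedCubical (d : ℕ) (X : Set (Fin d → ℝ)) : Prop :=
  ∃ 𝒬 : Finset (Set (Fin d → ℝ)), (∀ Q ∈ 𝒬, IsCube d Q) ∧ X = ⋃ Q ∈ 𝒬, (Q : Set (Fin d → ℝ))

/-! ### auxiliary development -/

def itv (p : ℤ × Bool) : Set ℝ :=
  if p.2 then Set.Icc (p.1 : ℝ) ((p.1 : ℝ) + 1) else {(p.1 : ℝ)}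

noncomputable def ctr (p : ℤ × Bool) : ℝ := if p.2 then (p.1 : ℝ) + 1/2 else (p.1 : ℝ)

lemma ctr_mem (p : ℤ × Bool) : ctr p ∈ itv p := by
  obtain ⟨l, b⟩ := p
  cases b
  · simp [ctr, itv]
  · simp only [ctr, itv, if_pos rfl]
    constructor <;> norm_num

lemma singleton_ne_icc (x : ℝ) (l : ℤ) : ({x} : Set ℝ) ≠ Set.Icc (l : ℝ) ((l : ℝ) + 1) := by
  intro h
  have h1 : (l : ℝ) ∈ ({x} : Set ℝ) := h ▸ Set.mem_Icc.mpr ⟨le_refl _, by linarith⟩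
  have h2 : (l : ℝ) + 1 ∈ ({x} : Set ℝ) := h ▸ Set.mem_Icc.mpr ⟨by linarith, le_refl _⟩
  rw [Set.mem_singleton_iff] at h1 h2
  linarith [h1, h2]

lemma itv_subset_of_ctr_mem {p r : ℤ × Bool} (h : ctr p ∈ itv r) : itv p ⊆ itv r := by
  obtain ⟨l, b⟩ := p
  cases b
  · simpa [ctr, itv] using h
  · obtain ⟨m, c⟩ := r
    cases c
    · exfalso
      norm_num [ctr, itv] at h
      have h2 : (2 * l + 1 : ℤ) = 2 * m := by exact_mod_cast (by push_cast; linarith :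
        ((2 * l + 1 : ℤ) : ℝ) = ((2 * m : ℤ) : ℝ))
      omega
    · norm_num [ctr, itv, Set.mem_Icc] at h ⊢
      have hml : (m : ℝ) < l + 1 := by linarith [h.1]
      have hlm : (l : ℝ) < m + 1 := by linarith [h.2]
      have h1 : m < l + 1 := by exact_mod_cast (by push_cast; linarith :
        ((m : ℤ) : ℝ) < ((l + 1 : ℤ) : ℝ))
      have h2 : l < m + 1 := by exact_mod_cast (by push_cast; linarith :
        ((l : ℤ) : ℝ) < ((m + 1 : ℤ) : ℝ))
      have : m = l := by omega
      subst this
      exact le_refl _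

lemma ctr_mem_icc {p : ℤ × Bool} {m : ℤ} (h : ctr p ∈ Set.Icc (m : ℝ) ((m : ℝ) + 1)) :
    (p.2 = true ∧ p.1 = m) ∨ (p.2 = false ∧ (p.1 = m ∨ p.1 = m + 1)) := by
  obtain ⟨l, b⟩ := p
  obtain ⟨h1, h2⟩ := Set.mem_Icc.mp h
  cases b
  · right
    refine ⟨rfl, ?_⟩
    norm_num [ctr] at h1 h2
    have h1' : m ≤ l := by exact_mod_cast h1
    have h2' : l ≤ m + 1 := by exact_mod_cast (by push_cast; linarith :
      ((l : ℤ) : ℝ) ≤ ((m + 1 : ℤ) : ℝ))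
    omega
  · left
    refine ⟨rfl, ?_⟩
    norm_num [ctr] at h1 h2
    have h1' : m < l + 1 := by exact_mod_cast (by push_cast; linarith :
      ((m : ℤ) : ℝ) < ((l + 1 : ℤ) : ℝ))
    have h2' : l < m + 1 := by exact_mod_cast (by push_cast; linarith :
      ((l : ℤ) : ℝ) < ((m + 1 : ℤ) : ℝ))
    omega

lemma isElemCube_iff {d q : ℕ} {Q : Set (Fin d → ℝ)} :
    IsElemCube d q Q ↔ ∃ f : Fin d → ℤ × Bool,
      (Finset.univ.filter fun j => (f j).2 = true).card = q ∧
      Q = Set.pi Set.univ fun j => itv (f j) := by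
  classical
  constructor
  · rintro ⟨I, hI, hcard, rfl⟩
    have hex : ∀ i, ∃ p : ℤ × Bool, I i = itv p ∧
        ((p.2 = true) ↔ ∃ l : ℤ, I i = Set.Icc (l : ℝ) ((l : ℝ) + 1)) := by
      intro i
      obtain ⟨l, hl | hl⟩ := hI i
      · exact ⟨(l, true), by simp [itv, hl], by simpa using ⟨l, hl⟩⟩
      · refine ⟨(l, false), by simp [itv, hl], ?_⟩
        simp only [Bool.false_eq_true, false_iff, not_exists]
        intro m hm
        rw [hl] at hm
        exact singleton_ne_icc _ _ hm
    choose f hf1 hf2 using hex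
    refine ⟨f, ?_, ?_⟩
    · rw [Finset.filter_congr (fun j _ => hf2 j), ← hcard, Nat.card_eq_fintype_card]
      exact (Fintype.card_subtype _).symm
    · exact congrArg _ (funext fun j => hf1 j)
  · rintro ⟨f, hcard, rfl⟩
    refine ⟨fun j => itv (f j), ?_, ?_, rfl⟩
    · intro i
      refine ⟨(f i).1, ?_⟩
      rcases hb : (f i).2 with _ | _
      · right; simp [itv, hb]
      · left; simp [itv, hb]
    · rw [Nat.card_eq_fintype_card, Fintype.card_subtype, ← hcard]
      congr 1
      apply Finset.filter_congr
      intro j _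
      constructor
      · rintro ⟨l, hl⟩
        rcases hb : (f j).2 with _ | _
        · exfalso
          simp only [itv, hb, Bool.false_eq_true, if_false] at hl
          exact singleton_ne_icc _ _ hl
        · rfl
      · intro hb
        exact ⟨(f j).1, by simp [itv, hb]⟩

lemma pi_subset_of_ctr_mem {d : ℕ} {X : Set (Fin d → ℝ)} (hX : IsBoundedCubical d X)
    (f : Fin d → ℤ × Bool) (h : (fun j => ctr (f j)) ∈ X) :
    Set.pi Set.univ (fun j => itv (f j)) ⊆ X := by
  obtain ⟨𝒬, h𝒬, rfl⟩ := hX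
  simp only [Set.mem_iUnion, exists_prop] at h
  obtain ⟨R, hR, hcR⟩ := h
  obtain ⟨q', hq'⟩ := h𝒬 R hR
  obtain ⟨g, -, rfl⟩ := isElemCube_iff.mp hq'
  refine subset_trans ?_ (Set.subset_iUnion₂_of_subset _ hR (subset_refl _))
  intro y hy j _
  exact itv_subset_of_ctr_mem (hcR j (Set.mem_univ j)) (hy j (Set.mem_univ j))

abbrev Tgt (d v k : ℕ) : Type :=
  Fin v × Σ S : {S : Finset (Fin d) // S.card = k}, ({j : Fin d // j ∉ S.1} → Bool)

def decode {d v k : ℕ} (L : Fin v → Fin d → ℤ) (t : Tgt d v k) :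
    Set (Fin d → ℝ) :=
  Set.pi Set.univ fun j =>
    itv (if h : j ∈ t.2.1.1 then (L t.1 j, true)
         else (L t.1 j + (cond (t.2.2 ⟨j, h⟩) 1 0), false))

lemma card_Tgt (d v k : ℕ) : Nat.card (Tgt d v k) = v * (d.choose k * 2 ^ (d - k)) := by
  classical
  rw [Nat.card_eq_fintype_card, Fintype.card_prod, Fintype.card_fin, Fintype.card_sigma]
  congr 1
  have key : ∀ S : {S : Finset (Fin d) // S.card = k},
      Fintype.card ({j : Fin d // j ∉ S.1} → Bool) = 2 ^ (d - k) := by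
    intro S
    rw [Fintype.card_fun, Fintype.card_bool]
    congr 1
    rw [Fintype.card_subtype_compl, Fintype.card_fin]
    congr 1
    simp [Fintype.card_coe, S.2]
  rw [Finset.sum_congr rfl (fun S _ => key S), Finset.sum_const, Finset.card_univ,
    Fintype.card_finset_len, Fintype.card_fin, smul_eq_mul]


lemma key {d v : ℕ} {X Y : Set (Fin d → ℝ)} (hX : IsBoundedCubical d X)
    (Qs : Fin v → Set (Fin d → ℝ)) (hQs : ∀ i, IsElemCube d d (Qs i))
    (hcover : Y \ X ⊆ ⋃ i, Qs i) :
    ∃ L : Fin v → Fin d → ℤ, ∀ k : ℕ,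
      ∃ g : {Q' : Set (Fin d → ℝ) // IsElemCube d k Q' ∧ Q' ⊆ Y ∧ ¬Q' ⊆ X} → Tgt d v k,
        ∀ x, decode L (g x) = x.1 := by
  classical
  have hLex : ∀ i : Fin v, ∃ Lf : Fin d → ℤ,
      Qs i = Set.pi Set.univ fun j => Set.Icc (Lf j : ℝ) ((Lf j : ℝ) + 1) := by
    intro i
    obtain ⟨f, hf, hQ⟩ := isElemCube_iff.mp (hQs i)
    have hall : ∀ j, (f j).2 = true := by
      have huniv : Finset.univ.filter (fun j : Fin d => (f j).2 = true) = Finset.univ :=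
        Finset.eq_univ_of_card _ (by simpa using hf)
      intro j
      have hj : j ∈ Finset.univ.filter (fun j : Fin d => (f j).2 = true) := by
        rw [huniv]; exact Finset.mem_univ j
      exact (Finset.mem_filter.mp hj).2
    exact ⟨fun j => (f j).1, by
      rw [hQ]; exact congrArg _ (funext fun j => by simp [itv, hall j])⟩
  choose L hLspec using hLex
  refine ⟨L, fun k => ?_⟩
  have hrep : ∀ x : {Q' : Set (Fin d → ℝ) // IsElemCube d k Q' ∧ Q' ⊆ Y ∧ ¬Q' ⊆ X},
      ∃ f : Fin d → ℤ × Bool,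
        (Finset.univ.filter fun j => (f j).2 = true).card = k ∧
        x.1 = Set.pi Set.univ fun j => itv (f j) := fun x => isElemCube_iff.mp x.2.1
  choose f hfc hfQ using hrep
  have hcmem : ∀ x, (fun j => ctr (f x j)) ∈ x.1 := by
    intro x
    rw [hfQ x]
    intro j _
    exact ctr_mem _
  have hcU : ∀ x, ∃ i, (fun j => ctr (f x j)) ∈ Qs i := by
    intro x
    refine Set.mem_iUnion.mp (hcover ⟨x.2.2.1 (hcmem x), fun hc => x.2.2.2 ?_⟩)
    rw [hfQ x]
    exact pi_subset_of_ctr_mem hX _ hc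
  choose idx hidx using hcU
  have hcoord : ∀ x j,
      ((f x j).2 = true ∧ (f x j).1 = L (idx x) j) ∨
      ((f x j).2 = false ∧ ((f x j).1 = L (idx x) j ∨ (f x j).1 = L (idx x) j + 1)) := by
    intro x j
    have h := hidx x
    rw [hLspec (idx x)] at h
    exact ctr_mem_icc (h j (Set.mem_univ j))
  refine ⟨fun x => ⟨idx x, ⟨⟨Finset.univ.filter fun j => (f x j).2 = true, hfc x⟩,
    fun j => decide ((f x j.1).1 = L (idx x) j.1 + 1)⟩⟩, ?_⟩
  intro x
  rw [hfQ x]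
  unfold decode
  refine congrArg _ (funext fun j => ?_)
  beta_reduce
  by_cases hj : (f x j).2 = true
  · rw [dif_pos (by simpa using hj)]
    rcases hcoord x j with ⟨-, h1⟩ | ⟨h0, -⟩
    · rw [← h1, ← hj]
    · rw [hj] at h0; exact absurd h0 (by simp)
  · rw [dif_neg (by simpa using hj)]
    have hval : (f x j).1
        = L (idx x) j + (cond (decide ((f x j).1 = L (idx x) j + 1)) 1 0) := by
      rcases hcoord x j with ⟨h1, -⟩ | ⟨h0, hor⟩
      · exact absurd h1 hj
      · rcases hor with h2 | h2
        · have hne : ¬(L (idx x) j = L (idx x) j + 1) := by omega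
          rw [h2]; simp [hne]
        · rw [h2]; simp
    show itv (L (idx x) j + (cond (decide ((f x j).1 = L (idx x) j + 1)) 1 0), false)
        = itv (f x j)
    rw [← hval]
    rcases hcoord x j with ⟨h1, -⟩ | ⟨h0, -⟩
    · exact absurd h1 hj
    · exact congrArg itv (Prod.ext_iff.mpr ⟨rfl, h0.symm⟩)

/-- If `X ⊆ Y` are bounded cubical sets in `ℝ^d` and `Y \ X` is covered by `v` elementary
`d`-cubes, then `#(K^d_q(Y) \ K^d_q(X)) ≤ (d choose q)·2^(d-q)·v`; in particular
`#(K^d(Y) \ K^d(X)) ≤ 3^d·v`. -/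
theorem card_elemCubes_diff_le (d q v : ℕ) (hq : q ≤ d)
    (X Y : Set (Fin d → ℝ)) (hX : IsBoundedCubical d X) (hY : IsBoundedCubical d Y)
    (hXY : X ⊆ Y) (Qs : Fin v → Set (Fin d → ℝ)) (hQs : ∀ i, IsElemCube d d (Qs i))
    (hcover : Y \ X ⊆ ⋃ i, Qs i) :
    Nat.card {Q' : Set (Fin d → ℝ) // IsElemCube d q Q' ∧ Q' ⊆ Y ∧ ¬Q' ⊆ X} ≤
      d.choose q * 2 ^ (d - q) * v ∧
    Nat.card {Q' : Set (Fin d → ℝ) // IsCube d Q' ∧ Q' ⊆ Y ∧ ¬Q' ⊆ X} ≤ 3 ^ d * v := by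
  classical
  obtain ⟨L, hL⟩ := key hX Qs hQs hcover
  constructor
  · obtain ⟨g, hg⟩ := hL q
    have hginj : Function.Injective g := by
      intro a b h
      exact Subtype.ext (by rw [← hg a, ← hg b, h])
    calc Nat.card {Q' : Set (Fin d → ℝ) // IsElemCube d q Q' ∧ Q' ⊆ Y ∧ ¬Q' ⊆ X}
        ≤ Nat.card (Tgt d v q) := Nat.card_le_card_of_injective g hginj
      _ = d.choose q * 2 ^ (d - q) * v := by rw [card_Tgt]; ring
  · choose g hg using hL
    have hkex : ∀ x : {Q' : Set (Fin d → ℝ) // IsCube d Q' ∧ Q' ⊆ Y ∧ ¬Q' ⊆ X},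
        ∃ k : ℕ, k ≤ d ∧ IsElemCube d k x.1 := by
      intro x
      obtain ⟨k, hk⟩ := x.2.1
      obtain ⟨f, hf, -⟩ := isElemCube_iff.mp hk
      refine ⟨k, ?_, hk⟩
      rw [← hf]
      exact le_trans (Finset.card_filter_le _ _) (by simp)
    choose kk hkd hke using hkex
    set G : {Q' : Set (Fin d → ℝ) // IsCube d Q' ∧ Q' ⊆ Y ∧ ¬Q' ⊆ X} →
        Σ k : Fin (d + 1), Tgt d v k :=
      fun x => ⟨⟨kk x, Nat.lt_succ_of_le (hkd x)⟩, g (kk x) ⟨x.1, hke x, x.2.2⟩⟩ with hG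
    have hGinj : Function.Injective G := by
      intro a b h
      have hda := congrArg (fun p : Σ k : Fin (d + 1), Tgt d v k => decode L p.2) h
      change decode L (g (kk a) ⟨a.1, hke a, a.2.2⟩) = decode L (g (kk b) ⟨b.1, hke b, b.2.2⟩) at hda
      rw [hg, hg] at hda
      exact Subtype.ext hda
    calc Nat.card {Q' : Set (Fin d → ℝ) // IsCube d Q' ∧ Q' ⊆ Y ∧ ¬Q' ⊆ X}
        ≤ Nat.card (Σ k : Fin (d + 1), Tgt d v k) := Nat.card_le_card_of_injective G hGinj
      _ = ∑ k : Fin (d + 1), (v * (d.choose k * 2 ^ (d - k))) := by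
          rw [Nat.card_eq_fintype_card, Fintype.card_sigma]
          exact Finset.sum_congr rfl fun k _ => by
            rw [← card_Tgt d v k, Nat.card_eq_fintype_card]
      _ = v * ∑ k ∈ Finset.range (d + 1), d.choose k * 2 ^ (d - k) := by
          rw [Fin.sum_univ_eq_sum_range (fun k => v * (d.choose k * 2 ^ (d - k))),
            Finset.mul_sum]
      _ = 3 ^ d * v := by
          have h3 : ∑ k ∈ Finset.range (d + 1), d.choose k * 2 ^ (d - k) = 3 ^ d := by
            have := add_pow 1 2 d
            simp only [one_pow, one_mul, Nat.cast_id] at this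
            have h31 : (3 : ℕ) = 1 + 2 := by norm_num
            rw [h31, this]
            exact Finset.sum_congr rfl fun k _ => by ring
          rw [h3]; ring


end Cubical
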